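/- If μ(R) > 0, then for μ-almost every ω there exists m ∈ ℕ such that K(S^{l−m} ω) ≤ l for all l ∈ ℕ; in particular τ[0,∞](ω) := sup{s ≤ 0 : K(S^j ω) ≤ j − s for all integers j ≥ s} is finite μ-almost surely. -/

import Mathlib

open MeasureTheory

namespace Rinnovo

open ProbabilityTheory Set
open scoped symmDiff

/-- The shift by `n` on `ℤ → ℝ`. -/
def shift (n : ℤ) : (ℤ → ℝ) → (ℤ → ℝ) := fun ω i => ω (i + n)

lemma measurable_shift (n : ℤ) : Measurable (shift n) :=
  measurable_pi_lambda _ fun i => measurable_pi_apply (i + n)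

section

variable (μ : Measure (ℤ → ℝ)) [IsProbabilityMeasure μ]
    (hIndep : ProbabilityTheory.iIndepFun
      (fun i (ω : ℤ → ℝ) => ω i) μ)
    (hUnif : ∀ i : ℤ, Measure.map (fun ω : ℤ → ℝ => ω i) μ =
      volume.restrict (Set.Ico (0 : ℝ) 1))

include hIndep hUnif in
lemma box (fs : Finset ℤ) (t : ℤ → Set ℝ) (ht : ∀ i, MeasurableSet (t i)) :
    μ (⋂ i ∈ fs, (fun ω : ℤ → ℝ => ω i) ⁻¹' t i)
      = ∏ i ∈ fs, (volume.restrict (Set.Ico (0 : ℝ) 1)) (t i) := by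
  rw [hIndep.measure_inter_preimage_eq_mul fs (fun i _ => ht i)]
  refine Finset.prod_congr rfl fun i _ => ?_
  rw [← hUnif i, Measure.map_apply (measurable_pi_apply i) (ht i)]

include hIndep hUnif in
lemma map_shift (n : ℤ) : Measure.map (shift n) μ = μ := by
  have hm := measurable_shift n
  have : IsProbabilityMeasure (Measure.map (shift n) μ) :=
    Measure.isProbabilityMeasure_map hm.aemeasurable
  refine ext_of_generate_finite (squareCylinders fun _ : ℤ => {s : Set ℝ | MeasurableSet s})
    generateFrom_squareCylinders.symm
    (isPiSystem_squareCylinders (fun _ => MeasurableSpace.isPiSystem_measurableSet)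
      (fun _ => Set.mem_setOf.2 MeasurableSet.univ)) ?_ (by simp)
  rintro s ⟨fs, t, ht, rfl⟩
  have htm : ∀ i, MeasurableSet (t i) := fun i => ht i (mem_univ i)
  have hpi_eq : ∀ (g : Finset ℤ) (u : ℤ → Set ℝ),
      ((g : Set ℤ).pi u) = ⋂ i ∈ g, (fun ω : ℤ → ℝ => ω i) ⁻¹' u i := by
    intro g u; ext ω; simp [Set.mem_pi]
  have hmeas : MeasurableSet ((fs : Set ℤ).pi t) := by
    rw [hpi_eq]
    exact MeasurableSet.biInter (Finset.countable_toSet fs)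
      fun i _ => (measurable_pi_apply i) (htm i)
  rw [Measure.map_apply hm hmeas]
  have hpre : shift n ⁻¹' ((fs : Set ℤ).pi t)
      = ⋂ j ∈ fs.image (· + n), (fun ω : ℤ → ℝ => ω j) ⁻¹' t (j - n) := by
    ext ω
    constructor
    · intro h
      simp only [mem_iInter] at *
      intro j hj
      obtain ⟨i, hi, rfl⟩ := Finset.mem_image.1 hj
      have := h i hi
      rw [show i + n - n = i from by ring]
      simpa [shift] using this
    · intro h
      simp only [mem_iInter, mem_preimage, Set.mem_pi] at *
      intro i hi
      have := h (i + n) (Finset.mem_image_of_mem _ hi)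
      rw [show i + n - n = i from by ring] at this
      simpa [shift] using this
  rw [hpre, box μ hIndep hUnif _ _ (fun j => htm (j - n)), hpi_eq,
    box μ hIndep hUnif _ _ htm]
  rw [Finset.prod_image (by intro a _ b _ h; simpa using h)]
  exact Finset.prod_congr rfl fun x _ => by rw [add_sub_cancel_right]

include hIndep hUnif in
lemma pre_shift (n : ℤ) {s : Set (ℤ → ℝ)} (hs : MeasurableSet s) :
    μ (shift n ⁻¹' s) = μ s := by
  rw [← Measure.map_apply (measurable_shift n) hs, map_shift μ hIndep hUnif]

variable (K : (ℤ → ℝ) → ℕ) (hK : Measurable K)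

/-- The target set. -/
def A : Set (ℤ → ℝ) := {ω | ∃ m : ℕ, ∀ l : ℕ, K (shift ((l : ℤ) - (m : ℤ)) ω) ≤ l}

include hK in
lemma measurableSet_A : MeasurableSet (A K) := by
  have : A K = ⋃ m : ℕ, ⋂ l : ℕ, shift ((l : ℤ) - (m : ℤ)) ⁻¹' (K ⁻¹' Set.Iic l) := by
    ext ω; simp [A]
  rw [this]
  exact MeasurableSet.iUnion fun m => MeasurableSet.iInter fun l =>
    (measurable_shift _) (hK measurableSet_Iic)

lemma A_subset_shift (k : ℕ) : A K ⊆ shift (k : ℤ) ⁻¹' A K := by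
  rintro ω ⟨m, hm⟩
  refine ⟨m + k, fun l => ?_⟩
  have heq : shift ((l : ℤ) - ((m + k : ℕ) : ℤ)) (shift (k : ℤ) ω)
      = shift ((l : ℤ) - (m : ℤ)) ω := by
    funext i; simp only [shift]; congr 1; push_cast; ring
  rw [heq]
  exact hm l

end

lemma meas_le_add_symmDiff {α : Type*} [MeasurableSpace α] (μ : Measure α) (s t : Set α) :
    μ s ≤ μ t + μ (s ∆ t) := by
  refine (measure_mono ?_).trans (measure_union_le t (s ∆ t))
  intro x hx
  by_cases h : x ∈ t
  · exact Or.inl h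
  · exact Or.inr (Set.mem_symmDiff.2 (Or.inl ⟨hx, h⟩))

lemma inter_symmDiff_subset {α : Type*} (A A' B B' : Set α) :
    (A ∩ A') ∆ (B ∩ B') ⊆ (A ∆ B) ∪ (A' ∆ B') := by
  intro x hx
  rw [Set.mem_symmDiff] at hx
  simp only [Set.mem_union, Set.mem_symmDiff]
  rcases hx with ⟨⟨hA, hA'⟩, h⟩ | ⟨⟨hB, hB'⟩, h⟩
  · by_cases hB : x ∈ B
    · exact Or.inr (Or.inl ⟨hA', fun hB' => h ⟨hB, hB'⟩⟩)
    · exact Or.inl (Or.inl ⟨hA, hB⟩)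
  · by_cases hA : x ∈ A
    · exact Or.inr (Or.inr ⟨hB', fun hA' => h ⟨hA, hA'⟩⟩)
    · exact Or.inl (Or.inr ⟨hB, hA⟩)

end Rinnovo

open Rinnovo ProbabilityTheory Set
open scoped symmDiff ENNReal

/-- Proposition "rinnovo": on `Ω = ℤ → [0,1)` with `μ` the product of uniform measures
(characterized here by independence of the coordinates together with their uniform
distribution on `[0,1)`), let `K : Ω → ℕ` be measurable, `K_j(ω) = K(S^j ω)` where `S` is
the shift `(S^j ω)_i = ω_{i+j}`, and `R = {K_n ≤ n for all n ∈ ℕ}`. If `μ(R) > 0` then for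
`μ`-a.e. `ω` there is `m ∈ ℕ` with `K(S^{l−m} ω) ≤ l` for all `l ∈ ℕ`; in particular
`τ[0,∞] = sup{s ≤ 0 : K(S^j ω) ≤ j − s for all j ≥ s}` is finite `μ`-a.s. -/
theorem stmt4 (μ : Measure (ℤ → ℝ)) [IsProbabilityMeasure μ]
    (hIndep : ProbabilityTheory.iIndepFun
      (fun i (ω : ℤ → ℝ) => ω i) μ)
    (hUnif : ∀ i : ℤ, Measure.map (fun ω : ℤ → ℝ => ω i) μ =
      volume.restrict (Set.Ico (0 : ℝ) 1))
    (K : (ℤ → ℝ) → ℕ) (hK : Measurable K)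
    (hR : 0 < μ {ω | ∀ n : ℕ, K (fun i => ω (i + (n : ℤ))) ≤ n}) :
    ∀ᵐ ω ∂μ,
      (∃ m : ℕ, ∀ l : ℕ, K (fun i => ω (i + ((l : ℤ) - (m : ℤ)))) ≤ l) ∧
      (∃ s : ℤ, s ≤ 0 ∧ ∀ j : ℤ, s ≤ j →
        ((K (fun i => ω (i + j)) : ℤ) ≤ j - s)) := by
  classical
  set R : Set (ℤ → ℝ) := {ω | ∀ n : ℕ, K (fun i => ω (i + (n : ℤ))) ≤ n} with hRdef
  have hAmeas : MeasurableSet (A K) := measurableSet_A K hK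
  -- R ⊆ A
  have hRA : R ⊆ A K := by
    intro ω hω
    refine ⟨0, fun l => ?_⟩
    have := hω l
    simp only [Nat.cast_zero, sub_zero]; exact this
  -- the 0-1 argument: μ (A K) = 1
  have hApos : 0 < μ (A K) := lt_of_lt_of_le hR (measure_mono hRA)
  have hMD : μ.MeasureDense (measurableCylinders fun _ : ℤ => ℝ) :=
    Measure.MeasureDense.of_generateFrom_isSetAlgebra_finite μ
      ⟨empty_mem_measurableCylinders _,
        fun _ hs => compl_mem_measurableCylinders hs,
        fun _ _ hs ht => union_mem_measurableCylinders hs ht⟩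
      generateFrom_measurableCylinders.symm
  set a : ℝ := (μ (A K)).toReal with ha
  have key : ∀ ε : ℝ, 0 < ε → |a - a * a| ≤ 4 * ε := by
    intro ε hε
    obtain ⟨B, hBmem, hBapprox⟩ := hMD.approx (A K) hAmeas (measure_ne_top μ _) ε hε
    obtain ⟨fs, S, hS, rfl⟩ := (mem_measurableCylinders (α := fun _ : ℤ => ℝ) B).1 hBmem
    have hBmeas : MeasurableSet (cylinder fs S) := MeasurableSet.cylinder (α := fun _ : ℤ => ℝ) fs hS
    -- choose a shift separating fs from itself
    set M : ℕ := fs.sup fun i => i.natAbs with hM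
    set k : ℤ := ((2 * M + 1 : ℕ) : ℤ) with hk
    have hdisj : Disjoint fs (fs.image (· + k)) := by
      rw [Finset.disjoint_right]
      intro j hj hj'
      obtain ⟨i, hi, rfl⟩ := Finset.mem_image.1 hj
      have h1 : i.natAbs ≤ M := Finset.le_sup (f := fun i : ℤ => i.natAbs) hi
      have h2 : (i + k).natAbs ≤ M := Finset.le_sup (f := fun i : ℤ => i.natAbs) hj'
      omega
    -- independence of B and its shift
    have hind := hIndep.indepFun_finset fs (fs.image (· + k)) hdisj
      (fun i => measurable_pi_apply i)
    set r : (∀ _ : (fs.image (· + k) : Finset ℤ), ℝ) → (∀ _ : fs, ℝ) :=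
      fun x i => x ⟨(i : ℤ) + k, Finset.mem_image_of_mem _ i.2⟩ with hr
    have hrm : Measurable r := measurable_pi_lambda _ fun i => measurable_pi_apply _
    have hmul := hind.measure_inter_preimage_eq_mul S (r ⁻¹' S) hS (hrm hS)
    have hpre1 : (fun ω : ℤ → ℝ => fun i : fs => ω i) ⁻¹' S = cylinder fs S := rfl
    have hpre2 : (fun ω : ℤ → ℝ => fun i : (fs.image (· + k) : Finset ℤ) => ω i) ⁻¹' (r ⁻¹' S)
        = shift k ⁻¹' cylinder fs S := rfl
    rw [hpre1, hpre2] at hmul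
    -- abbreviations
    set B' : Set (ℤ → ℝ) := shift k ⁻¹' cylinder fs S with hB'
    set A' : Set (ℤ → ℝ) := shift k ⁻¹' A K with hA'
    have hA'eq : A K ∩ A' = A K :=
      Set.inter_eq_left.2 (by rw [hA', hk]; exact A_subset_shift K (2 * M + 1))
    have hμB' : μ B' = μ (cylinder fs S) := pre_shift μ hIndep hUnif k hBmeas
    have hμA' : μ A' = μ (A K) := pre_shift μ hIndep hUnif k hAmeas
    have hsymm' : μ (A' ∆ B') = μ (A K ∆ cylinder fs S) := by
      have : A' ∆ B' = shift k ⁻¹' (A K ∆ cylinder fs S) := by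
        simp [hA', hB', Set.preimage_symmDiff]
      rw [this]
      exact pre_shift μ hIndep hUnif k (hAmeas.symmDiff hBmeas)
    -- real numbers
    set b : ℝ := (μ (cylinder fs S)).toReal with hb
    set c : ℝ := (μ (A K ∆ cylinder fs S)).toReal with hc
    have hc_lt : c < ε := by
      rw [hc]
      exact ENNReal.toReal_lt_of_lt_ofReal hBapprox
    have hfin : ∀ s : Set (ℤ → ℝ), μ s ≠ ∞ := fun s => measure_ne_top μ s
    have htR : ∀ {x y : ℝ≥0∞}, y ≠ ∞ → x ≤ y → x.toReal ≤ y.toReal := by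
      intro x y hy h
      exact (ENNReal.toReal_le_toReal (h.trans_lt (lt_top_iff_ne_top.2 hy)).ne hy).2 h
    have hfin2 : ∀ s t : Set (ℤ → ℝ), μ s + μ t ≠ ∞ :=
      fun s t => ENNReal.add_ne_top.2 ⟨hfin s, hfin t⟩
    have hb0 : 0 ≤ b := ENNReal.toReal_nonneg
    have ha0 : 0 ≤ a := ENNReal.toReal_nonneg
    have ha1 : a ≤ 1 := by
      rw [ha]; exact ENNReal.toReal_le_of_le_ofReal one_pos.le (by simpa using prob_le_one)
    have hb1 : b ≤ 1 := by
      rw [hb]; exact ENNReal.toReal_le_of_le_ofReal one_pos.le (by simpa using prob_le_one)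
    -- |a - b| ≤ c
    have habs1 : |a - b| ≤ c := by
      rw [abs_sub_le_iff]
      constructor
      · have := htR (hfin2 _ _) (meas_le_add_symmDiff μ (A K) (cylinder fs S))
        rw [ENNReal.toReal_add (hfin _) (hfin _)] at this
        linarith [this]
      · have := htR (hfin2 _ _) (meas_le_add_symmDiff μ (cylinder fs S) (A K))
        rw [ENNReal.toReal_add (hfin _) (hfin _), symmDiff_comm] at this
        linarith [this]
    -- μ(B ∩ B') = b * b
    have hBB' : (μ (cylinder fs S ∩ B')).toReal = b * b := by
      rw [hmul, ENNReal.toReal_mul, ← hb, hμB']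
    -- |a - b*b| ≤ 2c
    have habs2 : |a - b * b| ≤ 2 * c := by
      have hsub : (A K ∩ A') ∆ (cylinder fs S ∩ B') ⊆
          (A K ∆ cylinder fs S) ∪ (A' ∆ B') := inter_symmDiff_subset _ _ _ _
      have h1 : μ ((A K ∩ A') ∆ (cylinder fs S ∩ B')) ≤
          μ (A K ∆ cylinder fs S) + μ (A' ∆ B') :=
        (measure_mono hsub).trans (measure_union_le _ _)
      have h2 := htR (hfin2 _ _) (meas_le_add_symmDiff μ (A K ∩ A') (cylinder fs S ∩ B'))
      have h3 := htR (hfin2 _ _) (meas_le_add_symmDiff μ (cylinder fs S ∩ B') (A K ∩ A'))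
      have h4 := htR (hfin2 _ _) h1
      rw [ENNReal.toReal_add (hfin _) (hfin _), hsymm'] at h4
      rw [ENNReal.toReal_add (hfin _) (hfin _)] at h2 h3
      rw [hA'eq] at h2 h3 h4
      rw [symmDiff_comm] at h3
      rw [hBB'] at h2 h3
      rw [abs_sub_le_iff]
      constructor <;> [skip; skip] <;>
        · first
          | (have := h2; nlinarith [h4, hc_lt])
          | (have := h3; nlinarith [h4, hc_lt])
    -- |b*b - a*a| ≤ 2c
    have habs3 : |b * b - a * a| ≤ 2 * c := by
      have : b * b - a * a = (b - a) * (b + a) := by ring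
      rw [this, abs_mul]
      have h1 : |b - a| ≤ c := by rwa [abs_sub_comm] at habs1
      have h2 : |b + a| ≤ 2 := by rw [abs_le]; constructor <;> linarith
      calc |b - a| * |b + a| ≤ c * 2 := by
            apply mul_le_mul h1 h2 (abs_nonneg _) (le_trans (abs_nonneg _) h1)
        _ = 2 * c := by ring
    calc |a - a * a| ≤ |a - b * b| + |b * b - a * a| := abs_sub_le _ _ _
      _ ≤ 2 * c + 2 * c := add_le_add habs2 habs3
      _ ≤ 4 * ε := by linarith
  -- conclude a = a * a
  have haa : a = a * a := by
    have h0 : |a - a * a| ≤ 0 := by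
      refine le_of_forall_pos_le_add fun ε hε => ?_
      have := key (ε / 4) (by linarith)
      linarith
    have := abs_nonneg (a - a * a)
    have : |a - a * a| = 0 := le_antisymm h0 this
    have := abs_eq_zero.1 this
    linarith
  have ha_pos : 0 < a := by
    refine ENNReal.toReal_pos (ne_of_gt hApos) (measure_ne_top μ _)
  have ha_one : a = 1 := by
    have h0 : a * (1 - a) = 0 := by nlinarith
    rcases mul_eq_zero.1 h0 with h | h
    · exact absurd h (ne_of_gt ha_pos)
    · linarith
  have hμA : μ (A K) = 1 := (ENNReal.toReal_eq_one_iff _).1 ha_one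
  have hae : ∀ᵐ ω ∂μ, ω ∈ A K := by
    rw [ae_iff]
    have hc : μ (A K)ᶜ = 0 := by
      rw [measure_compl hAmeas (measure_ne_top μ _), hμA, measure_univ, tsub_self]
    simpa [Set.compl_def] using hc
  filter_upwards [hae] with ω hω
  obtain ⟨m, hm⟩ := hω
  refine ⟨⟨m, fun l => hm l⟩, -(m : ℤ), neg_nonpos.2 (Int.natCast_nonneg m), fun j hj => ?_⟩
  have hjm : 0 ≤ j + m := by omega
  set l : ℕ := (j + m).toNat with hl
  have hlz : (l : ℤ) = j + m := Int.toNat_of_nonneg hjm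
  have hKl := hm l
  have heq : shift ((l : ℤ) - (m : ℤ)) ω = fun i => ω (i + j) := by
    funext i; simp only [shift]; congr 1; omega
  rw [heq] at hKl
  have hcast : (K (fun i => ω (i + j)) : ℤ) ≤ (l : ℤ) := by exact_mod_cast hKl
  omega
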